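/- Let H be a finite group and A ≤ H an abelian subgroup. Then the number of conjugacy classes of H satisfies k(H) ≥ |A| / [H : A]. -/

import Mathlib

theorem stmt_7 (H : Type*) [Group H] [Finite H] (A : Subgroup H) (hA : IsMulCommutative A) :
    (Nat.card (ConjClasses H) : ℚ) ≥ (Nat.card A : ℚ) / (A.index : ℚ) := by
  have h1 : commProb A = 1 := commProb_eq_one_iff.mpr hA
  have h2 := A.commProb_subgroup_le
  rw [h1, commProb_def'] at h2
  have hI : (0:ℚ) < (A.index : ℚ) := by
    exact_mod_cast Nat.pos_of_ne_zero (A.index_ne_zero_of_finite)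
  have hH : (0:ℚ) < (Nat.card H : ℚ) := by exact_mod_cast Nat.card_pos
  have hcard : (Nat.card A : ℚ) * A.index = Nat.card H := by
    exact_mod_cast congrArg (Nat.cast : ℕ → ℚ) A.card_mul_index
  rw [ge_iff_le, div_le_iff₀ hI]
  rw [div_mul_eq_mul_div, le_div_iff₀ hH] at h2
  have := mul_le_mul_of_nonneg_left h2 (le_of_lt (Nat.cast_pos.mpr (Nat.card_pos (α := A))))
  nlinarith [this, hcard, hI, hH]
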